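/- arXiv:1004.0197 — 2 statements merged into one kernel-verified Lean document; each statement's English description precedes it below -/
import Mathlib

section
/- For every integer m with |m| ≥ 2, there is no injective group homomorphism from the Baumslag–Solitar group BS(1, m) — the group presented by two generators a, b subject to the single relation b·a·b⁻¹ = a^m — into the group G₁. -/
def θ₀ : (ℤ × ℤ) →+ (ℤ × ℤ) where
  toFun p := (5 * p.1 + 2 * p.2, -p.1)
  map_zero' := by simp
  map_add' p q := by
    simp only [Prod.fst_add, Prod.snd_add, Prod.mk_add_mk, Prod.mk.injEq]
    constructor <;> ring

/-- The multiplicative version of `θ₀`. -/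
def Θ₁ : Multiplicative (ℤ × ℤ) →* Multiplicative (ℤ × ℤ) :=
  AddMonoidHom.toMultiplicative θ₀

theorem Θ₁_injective : Function.Injective Θ₁ := by
  intro p q h
  have h' : θ₀ p.toAdd = θ₀ q.toAdd := h
  have : p.toAdd = q.toAdd := by
    have h1 := congrArg Prod.fst h'
    have h2 := congrArg Prod.snd h'
    simp only [θ₀, AddMonoidHom.coe_mk, ZeroHom.coe_mk] at h1 h2
    ext <;> omega
  exact this

/-- The isomorphism from the base group onto the range of `Θ₁`. -/
noncomputable def φ₁ : (⊤ : Subgroup (Multiplicative (ℤ × ℤ))) ≃* Θ₁.range :=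
  Subgroup.topEquiv.trans (MonoidHom.ofInjective Θ₁_injective)

/-- The ascending HNN extension of `ℤ × ℤ` along `θ₀`. -/
abbrev G₁ := HNNExtension (Multiplicative (ℤ × ℤ)) ⊤ Θ₁.range φ₁


/-- The Baumslag–Solitar group `BS(1, m)`: the group presented by two generators
`a = of 0`, `b = of 1` subject to the single relation `b * a * b⁻¹ = a ^ m`. -/
def BS (m : ℤ) : Type :=
  PresentedGroup ({FreeGroup.of 1 * FreeGroup.of 0 * (FreeGroup.of 1)⁻¹ *
    (FreeGroup.of 0) ^ (-m)} : Set (FreeGroup (Fin 2)))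

noncomputable instance (m : ℤ) : Group (BS m) := by
  unfold BS; infer_instance

/-! ### Auxiliary setup: a concrete group `H = ℚ² ⋊ ℤ` receiving `G₁` injectively. -/

open Multiplicative

noncomputable section Aux

/-- The automorphism of `ℚ²` extending `θ₀`. -/
def Aq : (ℚ × ℚ) ≃+ (ℚ × ℚ) where
  toFun p := (5 * p.1 + 2 * p.2, -p.1)
  invFun p := (-p.2, (p.1 + 5 * p.2) / 2)
  left_inv p := by simp [Prod.ext_iff] <;> ring_nf
  right_inv p := by simp [Prod.ext_iff] <;> ring_nf
  map_add' p q := by simp [Prod.ext_iff] <;> constructor <;> ring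

def AmulAut : MulAut (Multiplicative (ℚ × ℚ)) := AddEquiv.toMultiplicative Aq

def φH : Multiplicative ℤ →* MulAut (Multiplicative (ℚ × ℚ)) := zpowersHom _ AmulAut

abbrev H := SemidirectProduct (Multiplicative (ℚ × ℚ)) (Multiplicative ℤ) φH

def j : (ℤ × ℤ) →+ (ℚ × ℚ) where
  toFun p := ((p.1 : ℚ), (p.2 : ℚ))
  map_zero' := by simp
  map_add' p q := by simp

theorem j_injective : Function.Injective j := by
  intro p q h
  simp only [j, AddMonoidHom.coe_mk, ZeroHom.coe_mk, Prod.ext_iff] at h ⊢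
  exact_mod_cast h

def jm : Multiplicative (ℤ × ℤ) →* Multiplicative (ℚ × ℚ) := AddMonoidHom.toMultiplicative j

theorem jm_injective : Function.Injective jm := fun p q h => j_injective h

def fbase : Multiplicative (ℤ × ℤ) →* H := SemidirectProduct.inl.comp jm

def xt : H := SemidirectProduct.inr (ofAdd (1:ℤ))

theorem jAq (p : ℤ × ℤ) : j (θ₀ p) = Aq (j p) := by
  simp only [j, θ₀, Aq, AddMonoidHom.coe_mk, ZeroHom.coe_mk, AddEquiv.coe_mk, Equiv.coe_fn_mk,
    Prod.ext_iff]
  push_cast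
  exact ⟨rfl, rfl⟩

theorem hcompat : ∀ a : (⊤ : Subgroup (Multiplicative (ℤ × ℤ))),
    xt * fbase ↑a = fbase ↑(φ₁ a) * xt := by
  intro a
  have h1 : (↑(φ₁ a) : Multiplicative (ℤ × ℤ)) = Θ₁ ↑a := by
    simp [φ₁, MonoidHom.ofInjective_apply]
  rw [h1]
  have h2 : jm (Θ₁ ↑a) = φH (ofAdd (1:ℤ)) (jm ↑a) := by
    have : φH (ofAdd (1:ℤ)) = AmulAut := by simp [φH]
    rw [this]
    show ofAdd (j (θ₀ (↑a : Multiplicative (ℤ×ℤ)).toAdd)) = ofAdd (Aq (j (↑a : Multiplicative (ℤ×ℤ)).toAdd))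
    rw [jAq]
  show xt * SemidirectProduct.inl (jm ↑a) = SemidirectProduct.inl (jm (Θ₁ ↑a)) * xt
  rw [h2, SemidirectProduct.inl_aut]
  simp [xt, mul_assoc]

/-- The homomorphism `G₁ →* H`. -/
def ψ : G₁ →* H := HNNExtension.lift fbase xt hcompat

theorem ψ_of (u : Multiplicative (ℤ × ℤ)) : ψ (HNNExtension.of u) = fbase u :=
  HNNExtension.lift_of _ _ _ _

theorem ψ_t : ψ HNNExtension.t = xt := HNNExtension.lift_t _ _ _

/-- The defining relation of `G₁` without subgroup coercions. -/
theorem t_mul_of' (u : Multiplicative (ℤ × ℤ)) :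
    (HNNExtension.t : G₁) * HNNExtension.of u = HNNExtension.of (Θ₁ u) * HNNExtension.t := by
  have h := HNNExtension.t_mul_of (φ := φ₁) ⟨u, trivial⟩
  have h1 : (↑(φ₁ ⟨u, trivial⟩) : Multiplicative (ℤ × ℤ)) = Θ₁ u := by
    simp [φ₁, MonoidHom.ofInjective_apply]
  rwa [h1] at h

theorem tpow_mul_of (k : ℕ) (u : Multiplicative (ℤ × ℤ)) :
    (HNNExtension.t : G₁) ^ k * HNNExtension.of u
      = HNNExtension.of (Θ₁^[k] u) * HNNExtension.t ^ k := by
  induction k generalizing u with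
  | zero => simp
  | succ n ih =>
    rw [pow_succ, mul_assoc, t_mul_of', ← mul_assoc, ih, ← Function.iterate_succ_apply]
    group

theorem of_mul_tpow_inv (k : ℕ) (u : Multiplicative (ℤ × ℤ)) :
    HNNExtension.of u * ((HNNExtension.t : G₁) ^ k)⁻¹
      = ((HNNExtension.t : G₁) ^ k)⁻¹ * HNNExtension.of (Θ₁^[k] u) := by
  have h := tpow_mul_of k u
  calc HNNExtension.of u * ((HNNExtension.t : G₁) ^ k)⁻¹
      = ((HNNExtension.t : G₁) ^ k)⁻¹ * ((HNNExtension.t : G₁) ^ k * HNNExtension.of u)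
        * ((HNNExtension.t : G₁) ^ k)⁻¹ := by group
    _ = ((HNNExtension.t : G₁) ^ k)⁻¹ * (HNNExtension.of (Θ₁^[k] u) * HNNExtension.t ^ k)
        * ((HNNExtension.t : G₁) ^ k)⁻¹ := by rw [h]
    _ = ((HNNExtension.t : G₁) ^ k)⁻¹ * HNNExtension.of (Θ₁^[k] u) := by group

/-- Normal form in the ascending HNN extension. -/
theorem normal_form (g : G₁) : ∃ (a b : ℕ) (u : Multiplicative (ℤ × ℤ)),
    g = ((HNNExtension.t : G₁) ^ a)⁻¹ * HNNExtension.of u * HNNExtension.t ^ b := by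
  induction g using HNNExtension.induction_on with
  | of g => exact ⟨0, 0, g, by simp⟩
  | t => exact ⟨0, 1, 1, by simp⟩
  | inv x hx =>
    obtain ⟨a, b, u, rfl⟩ := hx
    exact ⟨b, a, u⁻¹, by rw [map_inv]; group⟩
  | mul x y hx hy =>
    obtain ⟨a, b, u, rfl⟩ := hx
    obtain ⟨c, d, v, rfl⟩ := hy
    rcases le_or_gt c b with h | h
    · refine ⟨a, (b - c) + d, u * Θ₁^[b-c] v, ?_⟩
      have hb : (HNNExtension.t : G₁) ^ b = HNNExtension.t ^ (b - c) * HNNExtension.t ^ c := by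
        rw [← pow_add]; congr 1; omega
      have h5 := tpow_mul_of (b - c) v
      calc ((HNNExtension.t : G₁) ^ a)⁻¹ * HNNExtension.of u * HNNExtension.t ^ b *
            (((HNNExtension.t : G₁) ^ c)⁻¹ * HNNExtension.of v * HNNExtension.t ^ d)
          = ((HNNExtension.t : G₁) ^ a)⁻¹ * HNNExtension.of u *
              ((HNNExtension.t : G₁) ^ (b - c) * HNNExtension.of v) * HNNExtension.t ^ d := by
            rw [hb]; group
        _ = ((HNNExtension.t : G₁) ^ a)⁻¹ * HNNExtension.of u *
              (HNNExtension.of (Θ₁^[b-c] v) * HNNExtension.t ^ (b - c)) * HNNExtension.t ^ d := by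
            rw [h5]
        _ = ((HNNExtension.t : G₁) ^ a)⁻¹ * HNNExtension.of (u * Θ₁^[b-c] v) *
              HNNExtension.t ^ ((b - c) + d) := by
            rw [map_mul, pow_add]; group
    · refine ⟨a + (c - b), d, Θ₁^[c-b] u * v, ?_⟩
      have hc : (HNNExtension.t : G₁) ^ c = HNNExtension.t ^ (c - b) * HNNExtension.t ^ b := by
        rw [← pow_add]; congr 1; omega
      have h5 := of_mul_tpow_inv (c - b) u
      calc ((HNNExtension.t : G₁) ^ a)⁻¹ * HNNExtension.of u * HNNExtension.t ^ b *
            (((HNNExtension.t : G₁) ^ c)⁻¹ * HNNExtension.of v * HNNExtension.t ^ d)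
          = ((HNNExtension.t : G₁) ^ a)⁻¹ *
              (HNNExtension.of u * ((HNNExtension.t : G₁) ^ (c - b))⁻¹) * HNNExtension.of v *
              HNNExtension.t ^ d := by rw [hc]; group
        _ = ((HNNExtension.t : G₁) ^ a)⁻¹ *
              (((HNNExtension.t : G₁) ^ (c - b))⁻¹ * HNNExtension.of (Θ₁^[c-b] u)) *
              HNNExtension.of v * HNNExtension.t ^ d := by rw [h5]
        _ = ((HNNExtension.t : G₁) ^ (a + (c - b)))⁻¹ *
              HNNExtension.of (Θ₁^[c-b] u * v) * HNNExtension.t ^ d := by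
            rw [map_mul, pow_add]; group

theorem ψ_injective : Function.Injective ψ := by
  refine (injective_iff_map_eq_one ψ).mpr ?_
  intro g hg
  obtain ⟨a, b, u, rfl⟩ := normal_form g
  rw [map_mul, map_mul, map_inv, map_pow, map_pow, ψ_t, ψ_of] at hg
  have hr := congrArg SemidirectProduct.rightHom hg
  rw [map_mul, map_mul, map_inv, map_pow, map_pow, map_one] at hr
  have hru : SemidirectProduct.rightHom (fbase u) = 1 := by
    simp [fbase, SemidirectProduct.rightHom_inl]
  have hxtr : SemidirectProduct.rightHom xt = ofAdd (1:ℤ) := SemidirectProduct.rightHom_inr _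
  rw [hru, mul_one, hxtr] at hr
  have hab : a = b := by
    have := congrArg Multiplicative.toAdd hr
    simp only [toAdd_mul, toAdd_inv, toAdd_pow, toAdd_ofAdd, nsmul_eq_mul, mul_one,
      toAdd_one] at this
    omega
  subst hab
  -- now fbase u = xt ^ a * 1 * (xt ^ a)⁻¹ = 1
  have hfu : fbase u = 1 := by
    have : fbase u = xt ^ a * ((xt ^ a)⁻¹ * fbase u * xt ^ a) * (xt ^ a)⁻¹ := by group
    rw [this, hg]; group
  have hu : u = 1 := by
    have h9 : (SemidirectProduct.inl (jm u) : H) = SemidirectProduct.inl 1 := by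
      rw [map_one]; exact hfu
    have : jm u = 1 := SemidirectProduct.inl_injective h9
    exact jm_injective (by simpa using this)
  rw [hu, map_one, mul_one]
  exact inv_mul_cancel _

/-! ### Real quadratic irrationalities -/

def sq17 : ℝ := Real.sqrt 17

theorem sq17_sq : sq17 ^ 2 = 17 := Real.sq_sqrt (by norm_num)

theorem sq17_gt4 : (4:ℝ) < sq17 := by
  have : (4:ℝ) = Real.sqrt 16 := by
    rw [show (16:ℝ) = 4 ^ 2 by norm_num, Real.sqrt_sq] <;> norm_num
  rw [this]
  exact Real.sqrt_lt_sqrt (by norm_num) (by norm_num)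

theorem sq17_lt5 : sq17 < 5 := by
  have : (5:ℝ) = Real.sqrt 25 := by
    rw [show (25:ℝ) = 5 ^ 2 by norm_num, Real.sqrt_sq] <;> norm_num
  rw [this]
  exact Real.sqrt_lt_sqrt (by norm_num) (by norm_num)

theorem irr17 : Irrational sq17 := by
  have : (17:ℝ) = ((17:ℕ) : ℝ) := by norm_num
  rw [sq17, this]
  exact (by norm_num : Nat.Prime 17).irrational_sqrt

def lam : ℝ := (5 + sq17) / 2
def mu : ℝ := (5 - sq17) / 2

theorem lam_pos : 0 < lam := by unfold lam; nlinarith [sq17_gt4]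
theorem lam_gt_one : 1 < lam := by unfold lam; nlinarith [sq17_gt4]
theorem mu_pos : 0 < mu := by unfold mu; nlinarith [sq17_lt5]
theorem mu_lt_one : mu < 1 := by unfold mu; nlinarith [sq17_gt4]
theorem lam_add_mu : lam + mu = 5 := by unfold lam mu; ring
theorem lam_mul_mu : lam * mu = 2 := by
  unfold lam mu
  linear_combination (-(1:ℝ)/4) * sq17_sq

theorem lam_ne_zero : lam ≠ 0 := ne_of_gt lam_pos
theorem mu_ne_zero : mu ≠ 0 := ne_of_gt mu_pos

theorem abs_two_le_cases {m : ℤ} (hm : 2 ≤ |m|) : 2 ≤ m ∨ m ≤ -2 := by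
  rcases abs_cases m with ⟨h1, _⟩ | ⟨h1, _⟩ <;> rw [h1] at hm <;> omega

/-- `p + q √17` with `p, q > 0` rationals is never an integer. -/
theorem notInt (p q : ℚ) (hq : 0 < q) (z : ℤ) : (p:ℝ) + q * sq17 ≠ (z:ℝ) := by
  intro h
  apply irr17
  refine ⟨((z:ℚ) - p) / q, ?_⟩
  have hq' : (q:ℝ) ≠ 0 := by exact_mod_cast hq.ne'
  push_cast
  field_simp
  linarith

/-- positive powers of `p + q √17` (`p, q > 0`) have the same shape. -/
theorem powS (p q : ℚ) (hp : 0 < p) (hq : 0 < q) (n : ℕ) :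
    ∃ p' q' : ℚ, 0 < p' ∧ 0 < q' ∧ ((p:ℝ) + q * sq17) ^ (n + 1) = p' + q' * sq17 := by
  induction n with
  | zero => exact ⟨p, q, hp, hq, by norm_num⟩
  | succ n ih =>
    obtain ⟨p', q', hp', hq', hx⟩ := ih
    refine ⟨p' * p + 17 * (q' * q), p' * q + q' * p, by positivity, by positivity, ?_⟩
    rw [pow_succ, hx]
    push_cast
    linear_combination ((q':ℝ) * q) * sq17_sq

theorem lam_S (n : ℕ) : ∃ p q : ℚ, 0 < p ∧ 0 < q ∧ lam ^ (n + 1) = (p:ℝ) + q * sq17 := by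
  have h : lam = ((5/2 : ℚ) : ℝ) + (1/2 : ℚ) * sq17 := by unfold lam; push_cast; ring
  rw [h]
  exact powS _ _ (by norm_num) (by norm_num) n

theorem mu_inv : mu⁻¹ = (5 + sq17) / 4 := by
  have h : mu * ((5 + sq17) / 4) = 1 := by
    unfold mu
    linear_combination (-(1:ℝ)/8) * sq17_sq
  exact inv_eq_of_mul_eq_one_right h

theorem mu_inv_S (n : ℕ) : ∃ p q : ℚ, 0 < p ∧ 0 < q ∧ mu⁻¹ ^ (n + 1) = (p:ℝ) + q * sq17 := by
  have h : mu⁻¹ = ((5/4 : ℚ) : ℝ) + (1/4 : ℚ) * sq17 := by rw [mu_inv]; push_cast; ring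
  rw [h]
  exact powS _ _ (by norm_num) (by norm_num) n

section NoRoot
variable {m : ℤ} (hm : 2 ≤ |m|)

include hm

theorem m_bound' : 2 ≤ m ∨ m ≤ -2 := abs_two_le_cases hm

theorem m_cases : (2:ℝ) ≤ (m:ℝ) ∨ (m:ℝ) ≤ -2 := by
  rcases m_bound' hm with h | h
  · left; exact_mod_cast h
  · right; exact_mod_cast h

theorem NR_lam (l : ℤ) : lam ^ l ≠ (m:ℝ) := by
  intro h
  obtain ⟨n, rfl | rfl⟩ := Int.eq_nat_or_neg l
  · cases n with
    | zero =>
      simp only [Nat.cast_zero, zpow_zero] at h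
      have : (m:ℝ) = 1 := h.symm
      have : m = 1 := by exact_mod_cast this
      rcases m_bound' hm with h' | h' <;> omega
    | succ k =>
      obtain ⟨p, q, hp, hq, hS⟩ := lam_S k
      rw [zpow_natCast, hS] at h
      exact notInt p q hq m h
  · cases n with
    | zero =>
      simp only [Nat.cast_zero, neg_zero, zpow_zero] at h
      have : m = 1 := by exact_mod_cast h.symm
      rcases m_bound' hm with h' | h' <;> omega
    | succ k =>
      have h1 : (1:ℝ) < lam ^ (k+1 : ℕ) := one_lt_pow₀ lam_gt_one (by omega)
      have h2 : lam ^ (-((k+1 : ℕ) : ℤ)) = (lam ^ (k+1 : ℕ))⁻¹ := by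
        rw [zpow_neg, zpow_natCast]
      rw [h2] at h
      have h3 : 0 < (lam ^ (k+1 : ℕ))⁻¹ := by positivity
      have h4 : (lam ^ (k+1 : ℕ))⁻¹ < 1 := by
        rw [inv_lt_one_iff₀]; right; exact h1
      rcases m_cases hm with h5 | h5 <;> rw [h] at h3 h4 <;> linarith

theorem NR_mu (l : ℤ) : mu ^ l ≠ (m:ℝ) := by
  intro h
  obtain ⟨n, rfl | rfl⟩ := Int.eq_nat_or_neg l
  · cases n with
    | zero =>
      simp only [Nat.cast_zero, zpow_zero] at h
      have : m = 1 := by exact_mod_cast h.symm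
      rcases m_bound' hm with h' | h' <;> omega
    | succ k =>
      have h3 : 0 < mu ^ (k+1 : ℕ) := pow_pos mu_pos _
      have h4 : mu ^ (k+1 : ℕ) < 1 := pow_lt_one₀ mu_pos.le mu_lt_one (by omega)
      rw [zpow_natCast] at h
      rcases m_cases hm with h5 | h5 <;> rw [h] at h3 h4 <;> linarith
  · cases n with
    | zero =>
      simp only [Nat.cast_zero, neg_zero, zpow_zero] at h
      have : m = 1 := by exact_mod_cast h.symm
      rcases m_bound' hm with h' | h' <;> omega
    | succ k =>
      obtain ⟨p, q, hp, hq, hS⟩ := mu_inv_S k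
      have h2 : mu ^ (-((k+1 : ℕ) : ℤ)) = mu⁻¹ ^ (k+1 : ℕ) := by
        rw [zpow_neg, zpow_natCast, inv_pow]
      rw [h2, hS] at h
      exact notInt p q hq m h

end NoRoot

/-! ### The eigenfunctionals -/

def fr (v : Multiplicative (ℚ × ℚ)) : ℝ := (v.toAdd.1 : ℝ) + mu * (v.toAdd.2 : ℝ)
def gr (v : Multiplicative (ℚ × ℚ)) : ℝ := (v.toAdd.1 : ℝ) + lam * (v.toAdd.2 : ℝ)

theorem fr_A (v : Multiplicative (ℚ × ℚ)) : fr (AmulAut v) = lam * fr v := by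
  have h1 := lam_add_mu
  have h2 := lam_mul_mu
  show ((Aq v.toAdd).1 : ℝ) + mu * ((Aq v.toAdd).2 : ℝ) = lam * (((v.toAdd.1 : ℚ) : ℝ) + mu * (v.toAdd.2 : ℝ))
  simp only [Aq, AddEquiv.coe_mk, Equiv.coe_fn_mk]
  push_cast
  linear_combination (-(v.toAdd.1 : ℝ)) * h1 + (-(v.toAdd.2 : ℝ)) * h2

theorem gr_A (v : Multiplicative (ℚ × ℚ)) : gr (AmulAut v) = mu * gr v := by
  have h1 := lam_add_mu
  have h2 := lam_mul_mu
  show ((Aq v.toAdd).1 : ℝ) + lam * ((Aq v.toAdd).2 : ℝ) = mu * (((v.toAdd.1 : ℚ) : ℝ) + lam * (v.toAdd.2 : ℝ))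
  simp only [Aq, AddEquiv.coe_mk, Equiv.coe_fn_mk]
  push_cast
  linear_combination (-(v.toAdd.1 : ℝ)) * h1 + (-(v.toAdd.2 : ℝ)) * h2

/-- Iterated eigen-equation. -/
theorem eigen_pow (F : Multiplicative (ℚ × ℚ) → ℝ) (e : ℝ) (he : e ≠ 0)
    (hF : ∀ v, F (AmulAut v) = e * F v) (n : ℤ) (v : Multiplicative (ℚ × ℚ)) :
    F ((AmulAut ^ n) v) = e ^ n * F v := by
  have hFinv : ∀ v, F (AmulAut⁻¹ v) = e⁻¹ * F v := by
    intro v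
    have := hF (AmulAut⁻¹ v)
    rw [show AmulAut (AmulAut⁻¹ v) = v from AmulAut.apply_symm_apply v] at this
    field_simp [this]
    linear_combination -this
  induction n using Int.induction_on generalizing v with
  | zero => simp
  | succ k ih =>
    have : (AmulAut ^ ((k : ℤ) + 1)) v = (AmulAut ^ (k : ℤ)) (AmulAut v) := by
      rw [zpow_add_one]; rfl
    rw [this, ih, hF, zpow_add_one₀ he]
    ring
  | pred k ih =>
    have : (AmulAut ^ (-(k : ℤ) - 1)) v = (AmulAut ^ (-(k : ℤ))) (AmulAut⁻¹ v) := by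
      rw [zpow_sub_one]; rfl
    rw [this, ih, hFinv, zpow_sub_one₀ he]
    ring

theorem fr_zpow (v : Multiplicative (ℚ × ℚ)) (m : ℤ) : fr (v ^ m) = (m:ℝ) * fr v := by
  unfold fr
  rw [toAdd_zpow]
  have h1 : ((m • v.toAdd).1 : ℚ) = (m : ℚ) * v.toAdd.1 := by
    rw [Prod.smul_fst, zsmul_eq_mul]
  have h2 : ((m • v.toAdd).2 : ℚ) = (m : ℚ) * v.toAdd.2 := by
    rw [Prod.smul_snd, zsmul_eq_mul]
  rw [h1, h2]
  push_cast
  ring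

theorem gr_zpow (v : Multiplicative (ℚ × ℚ)) (m : ℤ) : gr (v ^ m) = (m:ℝ) * gr v := by
  unfold gr
  rw [toAdd_zpow]
  have h1 : ((m • v.toAdd).1 : ℚ) = (m : ℚ) * v.toAdd.1 := by
    rw [Prod.smul_fst, zsmul_eq_mul]
  have h2 : ((m • v.toAdd).2 : ℚ) = (m : ℚ) * v.toAdd.2 := by
    rw [Prod.smul_snd, zsmul_eq_mul]
  rw [h1, h2]
  push_cast
  ring

theorem fr_gr_zero (v : Multiplicative (ℚ × ℚ)) (hf : fr v = 0) (hg : gr v = 0) : v = 1 := by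
  unfold fr at hf
  unfold gr at hg
  have hlm : lam - mu = sq17 := by unfold lam mu; ring
  have hs : (0:ℝ) < sq17 := by linarith [sq17_gt4]
  have h2 : (v.toAdd.2 : ℝ) = 0 := by
    have : (lam - mu) * (v.toAdd.2 : ℝ) = 0 := by linarith
    rw [hlm] at this
    rcases mul_eq_zero.mp this with h | h
    · linarith
    · exact h
  have h1 : (v.toAdd.1 : ℝ) = 0 := by
    rw [h2] at hg; linarith
  have : v.toAdd = 0 := by
    ext
    · exact_mod_cast h1
    · exact_mod_cast h2
  rw [← toAdd_eq_zero]
  exact this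

/-! ### Solving the BS relation in `H` -/

theorem H_solve {m : ℤ} (hm : 2 ≤ |m|) (x y : H) (hxy : y * x * y⁻¹ = x ^ m) : x = 1 := by
  -- first: the ℤ-component of x is trivial
  have hr := congrArg SemidirectProduct.rightHom hxy
  rw [map_mul, map_mul, map_inv, map_zpow] at hr
  have hk : SemidirectProduct.rightHom x = SemidirectProduct.rightHom x ^ m := by
    rw [← hr]
    have : ∀ a b : Multiplicative ℤ, a * b * a⁻¹ = b := fun a b => by
      rw [mul_comm a b, mul_assoc, mul_inv_cancel, mul_one]
    rw [this]
  have hk0 : SemidirectProduct.rightHom x = 1 := by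
    have h1 := congrArg Multiplicative.toAdd hk
    rw [toAdd_zpow] at h1
    set k := (SemidirectProduct.rightHom x).toAdd with hkdef
    have h2 : (m - 1) * k = 0 := by
      have : k = m * k := by simpa [smul_eq_mul] using h1
      linarith [this]
    have h3 : k = 0 := by
      rcases mul_eq_zero.mp h2 with h | h
      · rcases abs_two_le_cases hm with h' | h' <;> omega
      · exact h
    rw [← toAdd_eq_zero, ← hkdef]
    exact h3
  have hxl : x = SemidirectProduct.inl x.left := by
    conv_lhs => rw [← SemidirectProduct.inl_left_mul_inr_right x]
    rw [show x.right = 1 from hk0, map_one, mul_one]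
  set v := x.left with hv
  -- conjugation formula
  have hconj : y * SemidirectProduct.inl v * y⁻¹
      = SemidirectProduct.inl (φH y.right v) := by
    conv_lhs => rw [← SemidirectProduct.inl_left_mul_inr_right y]
    rw [mul_inv_rev]
    calc SemidirectProduct.inl y.left * SemidirectProduct.inr y.right * SemidirectProduct.inl v *
          ((SemidirectProduct.inr y.right)⁻¹ * (SemidirectProduct.inl y.left)⁻¹)
        = SemidirectProduct.inl y.left *
            (SemidirectProduct.inr y.right * SemidirectProduct.inl v *
              (SemidirectProduct.inr y.right)⁻¹) * (SemidirectProduct.inl y.left)⁻¹ := by group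
      _ = SemidirectProduct.inl y.left * SemidirectProduct.inl (φH y.right v) *
            (SemidirectProduct.inl y.left)⁻¹ := by
          rw [show (SemidirectProduct.inr y.right : H)⁻¹
              = SemidirectProduct.inr y.right⁻¹ from (map_inv _ _).symm,
            ← SemidirectProduct.inl_aut]
      _ = SemidirectProduct.inl (y.left * φH y.right v * y.left⁻¹) := by
          rw [← map_mul, ← map_inv, ← map_mul]
      _ = SemidirectProduct.inl (φH y.right v) := by
          rw [mul_comm y.left, mul_assoc, mul_inv_cancel, mul_one]
  rw [hxl, hconj, ← map_zpow] at hxy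
  have heig : φH y.right v = v ^ m := SemidirectProduct.inl_injective hxy
  -- now apply the eigenfunctionals
  have hphh : φH y.right = AmulAut ^ y.right.toAdd := by
    simp [φH]
  rw [hphh] at heig
  set l := y.right.toAdd with hl
  have hfr : lam ^ l * fr v = (m:ℝ) * fr v := by
    rw [← eigen_pow fr lam lam_ne_zero fr_A l v, heig, fr_zpow]
  have hgr : mu ^ l * gr v = (m:ℝ) * gr v := by
    rw [← eigen_pow gr mu mu_ne_zero gr_A l v, heig, gr_zpow]
  have hfr0 : fr v = 0 := by
    by_contra hne
    exact NR_lam hm l (mul_right_cancel₀ hne (by linarith [hfr]))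
  have hgr0 : gr v = 0 := by
    by_contra hne
    exact NR_mu hm l (mul_right_cancel₀ hne (by linarith [hgr]))
  have hv1 : v = 1 := fr_gr_zero v hfr0 hgr0
  rw [hxl, hv1, map_one]

/-! ### Nontriviality of the generator `a` in `BS m` -/

def bsRels (m : ℤ) : Set (FreeGroup (Fin 2)) :=
  {FreeGroup.of 1 * FreeGroup.of 0 * (FreeGroup.of 1)⁻¹ * (FreeGroup.of 0) ^ (-m)}

theorem BS_a_ne_one (m : ℤ) (hm : 2 ≤ |m|) :
    (PresentedGroup.of 0 : BS m) ≠ 1 := by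
  have hm0 : (m:ℚ) ≠ 0 := by
    have : m ≠ 0 := by rcases abs_cases m with ⟨h1, _⟩ | ⟨h1, _⟩ <;> omega
    exact_mod_cast this
  -- representation into Perm ℚ : a ↦ x+1, b ↦ m*x
  let fa : Equiv.Perm ℚ := Equiv.addRight (1:ℚ)
  let fb : Equiv.Perm ℚ := Equiv.mulLeft₀ (m:ℚ) hm0
  let f : Fin 2 → Equiv.Perm ℚ := fun i => if i = 0 then fa else fb
  have hrel : ∀ r ∈ ({FreeGroup.of 1 * FreeGroup.of 0 * (FreeGroup.of 1)⁻¹ *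
      (FreeGroup.of 0) ^ (-m)} : Set (FreeGroup (Fin 2))), FreeGroup.lift f r = 1 := by
    intro r hr
    rw [Set.mem_singleton_iff] at hr
    subst hr
    rw [map_mul, map_mul, map_mul, map_inv, map_zpow, FreeGroup.lift_apply_of, FreeGroup.lift_apply_of]
    show fb * fa * fb⁻¹ * fa ^ (-m) = 1
    have hzar : ∀ n : ℤ, (Equiv.addRight (1:ℚ)) ^ n = Equiv.addRight (n • (1:ℚ)) := by
      intro n
      induction n using Int.induction_on with
      | zero => ext y; simp
      | succ k ih => ext y; rw [zpow_add_one, Equiv.Perm.mul_apply, ih]; simp; ring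
      | pred k ih => ext y; rw [zpow_sub_one, Equiv.Perm.mul_apply, ih]; simp [Equiv.Perm.inv_def]; ring
    ext x
    simp only [fa, fb, hzar, zsmul_eq_mul, Int.cast_neg, mul_one, Equiv.Perm.mul_apply, Equiv.Perm.one_apply,
      Equiv.coe_addRight, Equiv.Perm.inv_def, Equiv.mulLeft₀_apply, Equiv.mulLeft₀_symm_apply]
    field_simp
    ring
  let ρ : BS m →* Equiv.Perm ℚ := PresentedGroup.toGroup hrel
  intro hcontra
  have h1 : ρ (PresentedGroup.of 0) = fa := PresentedGroup.toGroup.of hrel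
  replace h1 : (1 : Equiv.Perm ℚ) = fa := by rw [← h1, hcontra]; exact (map_one ρ).symm
  have h2 : (1 : Equiv.Perm ℚ) (0:ℚ) = fa (0:ℚ) := by rw [h1]
  simp [fa] at h2

/-- The relator holds in `BS m`. -/
theorem BS_relation (m : ℤ) :
    (PresentedGroup.of 1 : BS m) * PresentedGroup.of 0 * (PresentedGroup.of 1)⁻¹ *
      (PresentedGroup.of 0) ^ (-m) = 1 := by
  have h : (PresentedGroup.mk _ (FreeGroup.of 1 * FreeGroup.of 0 * (FreeGroup.of 1)⁻¹ *
      (FreeGroup.of 0) ^ (-m)) : BS m) = 1 := by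
    apply (QuotientGroup.eq_one_iff _).mpr
    exact Subgroup.subset_normalClosure rfl
  rw [map_mul, map_mul, map_mul, map_inv, map_zpow] at h
  exact h

end Aux

/-- For every integer `m` with `|m| ≥ 2` there is no injective group homomorphism
from `BS(1, m)` into `G₁`. -/
theorem G₁_no_BS_subgroup (m : ℤ) (hm : 2 ≤ |m|) :
    ¬ ∃ f : BS m →* G₁, Function.Injective f := by
  rintro ⟨f, hf⟩
  set X : H := ψ (f (PresentedGroup.of 0)) with hX
  set Y : H := ψ (f (PresentedGroup.of 1)) with hY
  have hrel := BS_relation m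
  have hrel2 := congrArg (ψ.comp f) hrel
  erw [map_mul, map_mul, map_mul, map_inv, map_zpow, map_one] at hrel2
  have hYXY : Y * X * Y⁻¹ = X ^ m := by
    have : Y * X * Y⁻¹ * X ^ (-m) = 1 := hrel2
    have h2 : Y * X * Y⁻¹ * X ^ (-m) * X ^ m = X ^ m := by rw [this, one_mul]
    rwa [mul_assoc, ← zpow_add, neg_add_cancel, zpow_zero, mul_one] at h2
  have hX1 : X = 1 := H_solve hm X Y hYXY
  have : f (PresentedGroup.of 0) = 1 := by
    apply ψ_injective
    rw [map_one]; exact hX1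
  have : (PresentedGroup.of 0 : BS m) = 1 := by
    apply hf
    exact this.trans (map_one f).symm
  exact BS_a_ne_one m hm this
end

section
/- Let B be a finitely generated additive subgroup of ℤ →₀ ℤ with B ≠ ⊥. Then for every natural number k ≥ 1 and every integer i, the image of B under L^k is not contained in the image of B under S^i, and the image of B under S^i is not contained in the image of B under L^k. -/
/-- The shift automorphism `S` of `ℤ →₀ ℤ`, with `(S f) j = f (j - 1)`. -/
def S : AddAut (ℤ →₀ ℤ) := (Finsupp.domCongr (Equiv.addRight (1 : ℤ)) : (ℤ →₀ ℤ) ≃+ (ℤ →₀ ℤ))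

theorem S_apply (f : ℤ →₀ ℤ) (j : ℤ) : S f j = f (j - 1) := by
  simp [S, Finsupp.domCongr_apply, sub_eq_add_neg]

/-- The additive endomorphism `L f = f + S f` of `ℤ →₀ ℤ`. -/
noncomputable def L : AddMonoid.End (ℤ →₀ ℤ) :=
  AddMonoidHom.mk' (fun f => f + S f) (by intro a b; simp only [map_add]; abel)

theorem L_def (f : ℤ →₀ ℤ) : L f = f + S f := rfl

/-- Auxiliary predicate: `m` and `M` are the exact lower/upper bounds of the support. -/
def Bd (f : ℤ →₀ ℤ) (m M : ℤ) : Prop :=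
  f m ≠ 0 ∧ f M ≠ 0 ∧ (∀ j, j < m → f j = 0) ∧ (∀ j, M < j → f j = 0)

lemma Bd.le {f : ℤ →₀ ℤ} {m M : ℤ} (h : Bd f m M) : m ≤ M := by
  by_contra hc
  exact h.2.1 (h.2.2.1 M (lt_of_not_ge hc))

lemma Bd.ne_zero {f : ℤ →₀ ℤ} {m M : ℤ} (h : Bd f m M) : f ≠ 0 := by
  intro h0; exact h.1 (by simp [h0])

lemma bd_unique {f : ℤ →₀ ℤ} {m M m' M' : ℤ} (h : Bd f m M) (h' : Bd f m' M') :
    m = m' ∧ M = M' := by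
  constructor
  · rcases lt_trichotomy m m' with hlt | he | hlt
    · exact absurd (h'.2.2.1 m hlt) h.1
    · exact he
    · exact absurd (h.2.2.1 m' hlt) h'.1
  · rcases lt_trichotomy M M' with hlt | he | hlt
    · exact absurd (h.2.2.2 M' hlt) h'.2.1
    · exact he
    · exact absurd (h'.2.2.2 M hlt) h.2.1

lemma exists_bd (f : ℤ →₀ ℤ) (hf : f ≠ 0) : ∃ m M, Bd f m M := by
  have hne : f.support.Nonempty := Finsupp.support_nonempty_iff.mpr hf
  refine ⟨f.support.min' hne, f.support.max' hne, ?_, ?_, ?_, ?_⟩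
  · exact Finsupp.mem_support_iff.mp (f.support.min'_mem hne)
  · exact Finsupp.mem_support_iff.mp (f.support.max'_mem hne)
  · intro j hj
    by_contra hz
    exact absurd (f.support.min'_le j (Finsupp.mem_support_iff.mpr hz)) (not_le.mpr hj)
  · intro j hj
    by_contra hz
    exact absurd (f.support.le_max' j (Finsupp.mem_support_iff.mpr hz)) (not_le.mpr hj)

lemma S_inv_apply (f : ℤ →₀ ℤ) (j : ℤ) : ((-S) f) j = f (j + 1) := by
  have h := S_apply ((-S) f) (j + 1)
  simp only [add_sub_cancel_right] at h
  rw [← h]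
  norm_num

lemma S_zpow_apply (i : ℤ) : ∀ (f : ℤ →₀ ℤ) (j : ℤ), ((i • S) f) j = f (j - i) := by
  induction i using Int.induction_on with
  | zero => simp
  | succ n ih =>
      intro f j
      rw [add_one_zsmul, AddAut.add_apply, ih (S f) j, S_apply]
      ring_nf
  | pred n ih =>
      intro f j
      rw [sub_one_zsmul, AddAut.add_apply, ih ((-S) f) j, S_inv_apply]
      ring_nf

lemma L_apply' (f : ℤ →₀ ℤ) (j : ℤ) : (L f) j = f j + f (j - 1) := by
  rw [L_def, Finsupp.add_apply, S_apply]

lemma bd_S_zpow {f : ℤ →₀ ℤ} {m M : ℤ} (i : ℤ) (h : Bd f m M) :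
    Bd ((i • S) f) (m + i) (M + i) := by
  obtain ⟨h1, h2, h3, h4⟩ := h
  refine ⟨?_, ?_, ?_, ?_⟩
  · rw [S_zpow_apply]; simpa using h1
  · rw [S_zpow_apply]; simpa using h2
  · intro j hj; rw [S_zpow_apply]; exact h3 _ (by omega)
  · intro j hj; rw [S_zpow_apply]; exact h4 _ (by omega)

lemma bd_L {f : ℤ →₀ ℤ} {m M : ℤ} (h : Bd f m M) : Bd (L f) m (M + 1) := by
  obtain ⟨h1, h2, h3, h4⟩ := h
  refine ⟨?_, ?_, ?_, ?_⟩
  · rw [L_apply', h3 (m - 1) (by omega)]; simpa using h1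
  · rw [L_apply', h4 (M + 1) (by omega)]; simpa using h2
  · intro j hj; rw [L_apply', h3 j hj, h3 (j - 1) (by omega)]; ring
  · intro j hj; rw [L_apply', h4 j (by omega), h4 (j - 1) (by omega)]; ring

lemma bd_L_pow (k : ℕ) : ∀ (f : ℤ →₀ ℤ) (m M : ℤ), Bd f m M →
    Bd ((L ^ k : AddMonoid.End (ℤ →₀ ℤ)) f) m (M + k) := by
  induction k with
  | zero => intro f m M h; simpa using h
  | succ k ih =>
      intro f m M h
      have : (L ^ (k + 1) : AddMonoid.End (ℤ →₀ ℤ)) f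
          = (L ^ k : AddMonoid.End (ℤ →₀ ℤ)) (L f) := by
        rw [pow_succ]
        rfl
      rw [this]
      have h2 := ih (L f) m (M + 1) (bd_L h)
      have e : M + ((k + 1 : ℕ) : ℤ) = M + 1 + (k : ℤ) := by push_cast; ring
      rw [e]
      exact h2

lemma support_bdd (B : AddSubgroup (ℤ →₀ ℤ)) (hFG : B.FG) :
    ∃ N : ℤ, 0 ≤ N ∧ ∀ f ∈ B, ∀ j : ℤ, f j ≠ 0 → |j| ≤ N := by
  obtain ⟨s, hs⟩ := hFG
  classical
  set T : Finset ℤ := s.biUnion Finsupp.support with hT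
  refine ⟨(T.sup Int.natAbs : ℕ), by positivity, ?_⟩
  have hsub : ∀ f ∈ B, f.support ⊆ T := by
    intro f hf
    rw [← hs] at hf
    induction hf using AddSubgroup.closure_induction with
    | mem x hx => exact fun j hj => Finset.mem_biUnion.mpr ⟨x, hx, hj⟩
    | zero => simp
    | add x y hx hy ihx ihy =>
        exact fun j hj => by
          rcases Finset.mem_union.mp (Finsupp.support_add hj) with h | h
          · exact ihx h
          · exact ihy h
    | neg x hx ihx => simpa using ihx
  intro f hf j hj
  have hjT : j ∈ T := hsub f hf (Finsupp.mem_support_iff.mpr hj)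
  have : j.natAbs ≤ T.sup Int.natAbs := Finset.le_sup hjT
  rw [Int.abs_eq_natAbs]
  exact_mod_cast this

/-- For a nontrivial finitely generated additive subgroup `B` of `ℤ →₀ ℤ`,
`k ≥ 1` and `i : ℤ`, the image of `B` under `L ^ k` is not contained in the
image of `B` under `S ^ i`, and vice versa. -/
theorem image_L_pow_not_le_image_S_zpow (B : AddSubgroup (ℤ →₀ ℤ))
    (hFG : B.FG) (hB : B ≠ ⊥) (k : ℕ) (hk : 1 ≤ k) (i : ℤ) :
    ¬ (B.map ((L ^ k : AddMonoid.End (ℤ →₀ ℤ)) : (ℤ →₀ ℤ) →+ (ℤ →₀ ℤ)) ≤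
        B.map (i • S).toAddMonoidHom) ∧
    ¬ (B.map (i • S).toAddMonoidHom ≤
        B.map ((L ^ k : AddMonoid.End (ℤ →₀ ℤ)) : (ℤ →₀ ℤ) →+ (ℤ →₀ ℤ))) := by
  obtain ⟨b₀, hb₀⟩ := AddSubgroup.ne_bot_iff_exists_ne_zero.mp hB
  have hb₀B : (b₀ : ℤ →₀ ℤ) ∈ B := b₀.2
  have hb₀ne : (b₀ : ℤ →₀ ℤ) ≠ 0 := fun h => hb₀ (by exact_mod_cast Subtype.ext h)
  obtain ⟨m₀, M₀, hbd₀⟩ := exists_bd _ hb₀ne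
  obtain ⟨N, hN0, hN⟩ := support_bdd B hFG
  constructor
  · intro H
    -- step: widen by k
    have step : ∀ f ∈ B, ∀ m M : ℤ, Bd f m M →
        ∃ c ∈ B, Bd c (m - i) (M + k - i) := by
      intro f hf m M hbd
      have hmem : ((L ^ k : AddMonoid.End (ℤ →₀ ℤ)) : (ℤ →₀ ℤ) →+ (ℤ →₀ ℤ)) f ∈
          B.map ((L ^ k : AddMonoid.End (ℤ →₀ ℤ)) : (ℤ →₀ ℤ) →+ (ℤ →₀ ℤ)) :=
        AddSubgroup.mem_map_of_mem _ hf
      obtain ⟨c, hc, hce⟩ := AddSubgroup.mem_map.mp (H hmem)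
      have hLf : Bd ((L ^ k : AddMonoid.End (ℤ →₀ ℤ)) f) m (M + k) := bd_L_pow k f m M hbd
      have hcne : c ≠ 0 := by
        intro h0
        rw [h0] at hce
        simp only [map_zero] at hce
        exact hLf.ne_zero hce.symm
      obtain ⟨m', M', hbdc⟩ := exists_bd c hcne
      have hSc : Bd ((i • S) c) (m' + i) (M' + i) := bd_S_zpow i hbdc
      have hce' : (i • S) c = (L ^ k : AddMonoid.End (ℤ →₀ ℤ)) f := hce
      rw [hce'] at hSc
      obtain ⟨e1, e2⟩ := bd_unique hSc hLf
      have hm' : m' = m - i := by omega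
      have hM' : M' = M + k - i := by omega
      rw [hm', hM'] at hbdc
      exact ⟨c, hc, hbdc⟩
    -- grow width without bound
    have grow : ∀ n : ℕ, ∃ c ∈ B, ∃ m M : ℤ, Bd c m M ∧ (M₀ - m₀ + n * k : ℤ) ≤ M - m := by
      intro n
      induction n with
      | zero => exact ⟨b₀, hb₀B, m₀, M₀, hbd₀, by simp⟩
      | succ n ih =>
          obtain ⟨c, hc, m, M, hbd, hw⟩ := ih
          obtain ⟨c', hc', hbd'⟩ := step c hc m M hbd
          refine ⟨c', hc', m - i, M + k - i, hbd', ?_⟩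
          have : ((n : ℤ) + 1) * k = n * k + k := by ring
          push_cast
          push_cast at hw
          linarith
    obtain ⟨c, hc, m, M, hbd, hw⟩ := grow (2 * N + 1).toNat
    have h1 : |m| ≤ N := hN c hc m hbd.1
    have h2 : |M| ≤ N := hN c hc M hbd.2.1
    have hw0 : (0 : ℤ) ≤ M₀ - m₀ := by linarith [hbd₀.le]
    have hkk : (1 : ℤ) ≤ (k : ℤ) := by exact_mod_cast hk
    have hn : ((2 * N + 1).toNat : ℤ) = 2 * N + 1 := Int.toNat_of_nonneg (by omega)
    rw [hn] at hw
    have : (2 * N + 1) * (k : ℤ) ≥ 2 * N + 1 := le_mul_of_one_le_right (by omega) hkk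
    have habs : M - m ≤ 2 * N := by
      rw [abs_le] at h1 h2; omega
    linarith
  · intro H
    -- step: shrink by k
    have step : ∀ f ∈ B, ∀ m M : ℤ, Bd f m M →
        ∃ c ∈ B, Bd c (m + i) (M + i - k) := by
      intro f hf m M hbd
      have hmem : (i • S).toAddMonoidHom f ∈ B.map (i • S).toAddMonoidHom :=
        AddSubgroup.mem_map_of_mem _ hf
      obtain ⟨c, hc, hce⟩ := AddSubgroup.mem_map.mp (H hmem)
      have hSf : Bd ((i • S) f) (m + i) (M + i) := bd_S_zpow i hbd
      have hcne : c ≠ 0 := by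
        intro h0
        rw [h0] at hce
        replace hce := hce.symm.trans (map_zero _)
        exact hSf.ne_zero hce
      obtain ⟨m', M', hbdc⟩ := exists_bd c hcne
      have hLc : Bd ((L ^ k : AddMonoid.End (ℤ →₀ ℤ)) c) m' (M' + k) := bd_L_pow k c m' M' hbdc
      have hce' : (L ^ k : AddMonoid.End (ℤ →₀ ℤ)) c = (i • S) f := hce
      rw [hce'] at hLc
      obtain ⟨e1, e2⟩ := bd_unique hLc hSf
      have hm' : m' = m + i := by omega
      have hM' : M' = M + i - k := by omega
      rw [hm', hM'] at hbdc
      exact ⟨c, hc, hbdc⟩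
    -- width decreases strictly: impossible
    have descend : ∀ n : ℕ, ∀ f ∈ B, ∀ m M : ℤ, Bd f m M → M - m ≤ n → False := by
      intro n
      induction n with
      | zero =>
          intro f hf m M hbd hw
          obtain ⟨c, hc, hbd'⟩ := step f hf m M hbd
          have := hbd'.le
          have hkk : (1 : ℤ) ≤ (k : ℤ) := by exact_mod_cast hk
          omega
      | succ n ih =>
          intro f hf m M hbd hw
          obtain ⟨c, hc, hbd'⟩ := step f hf m M hbd
          have hkk : (1 : ℤ) ≤ (k : ℤ) := by exact_mod_cast hk
          exact ih c hc (m + i) (M + i - k) hbd' (by push_cast; push_cast at hw; omega)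
    exact descend (M₀ - m₀).toNat b₀ hb₀B m₀ M₀ hbd₀
      (by rw [Int.toNat_of_nonneg (by linarith [hbd₀.le])])
end
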